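/- For a Dynkin quiver Q of type A_n (vertices 1,...,n, all arrows i → i+1), the isomorphism classes of indecomposable representations of Q over ℂ are in bijection with the positive roots of sl_{n+1}: for each pair i ≤ j, there is a unique (up to isomorphism) indecomposable representation of dimension vector α_i + α_{i+1} + ... + α_j, and every indecomposable representation is of this form. -/

import Mathlib

/-- A finite-dimensional complex representation of the linearly oriented type `A`
quiver with vertices `0,1,...,n` and arrows `i → i+1`. -/
structure ARep (n : ℕ) where
  V : Fin (n + 1) → Type
  [grp : ∀ i, AddCommGroup (V i)]
  [mod : ∀ i, Module ℂ (V i)]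
  [fd : ∀ i, FiniteDimensional ℂ (V i)]
  f : ∀ i : Fin n, V i.castSucc →ₗ[ℂ] V i.succ

attribute [instance] ARep.grp ARep.mod ARep.fd

/-- Isomorphism of representations. -/
def ARepIso {n : ℕ} (M N : ARep n) : Prop :=
  ∃ e : ∀ i, M.V i ≃ₗ[ℂ] N.V i,
    ∀ (i : Fin n) (x : M.V i.castSucc), e i.succ (M.f i x) = N.f i (e i.castSucc x)

/-- Direct sum of two representations. -/
def ARep.dsum {n : ℕ} (M N : ARep n) : ARep n where
  V := fun i => M.V i × N.V i
  f := fun i => (M.f i).prodMap (N.f i)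

/-- Dimension vector of a representation. -/
noncomputable def ARep.dimVec {n : ℕ} (M : ARep n) : Fin (n + 1) → ℕ :=
  fun i => Module.finrank ℂ (M.V i)

/-- A representation is indecomposable if it is nonzero and any direct sum
decomposition has a zero summand. -/
def ARep.Indec {n : ℕ} (M : ARep n) : Prop :=
  (∃ i, M.dimVec i ≠ 0) ∧
  ∀ P Q : ARep n, ARepIso M (P.dsum Q) →
    (∀ i, P.dimVec i = 0) ∨ (∀ i, Q.dimVec i = 0)

/-- The positive root `α_i + α_{i+1} + ⋯ + α_j` of `sl_{n+2}`, as a dimension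
vector. -/
def intervalRoot (n : ℕ) (i j : Fin (n + 1)) : Fin (n + 1) → ℕ :=
  fun s => if i ≤ s ∧ s ≤ j then 1 else 0


namespace GabrielAux

variable {n : ℕ}

theorem iso_refl (M : ARep n) : ARepIso M M :=
  ⟨fun _ => LinearEquiv.refl ℂ _, fun _ _ => rfl⟩

theorem iso_symm {M N : ARep n} (h : ARepIso M N) : ARepIso N M := by
  obtain ⟨e, he⟩ := h
  refine ⟨fun k => (e k).symm, fun k y => ?_⟩
  have h1 := he k ((e k.castSucc).symm y)
  rw [LinearEquiv.apply_symm_apply] at h1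
  rw [← h1, LinearEquiv.symm_apply_apply]

theorem iso_trans {M N P : ARep n} (h : ARepIso M N) (h' : ARepIso N P) : ARepIso M P := by
  obtain ⟨e, he⟩ := h; obtain ⟨e', he'⟩ := h'
  refine ⟨fun k => (e k).trans (e' k), fun k x => ?_⟩
  simp only [LinearEquiv.trans_apply, he k x, he' k (e k.castSucc x)]

theorem dimVec_eq_of_iso {M N : ARep n} (h : ARepIso M N) : M.dimVec = N.dimVec := by
  obtain ⟨e, -⟩ := h
  funext k
  exact (e k).finrank_eq

theorem dimVec_dsum (M N : ARep n) (k : Fin (n + 1)) :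
    (M.dsum N).dimVec k = M.dimVec k + N.dimVec k :=
  Module.finrank_prod

theorem subsingleton_of_dim_zero {M : ARep n} {k : Fin (n + 1)} (h : M.dimVec k = 0) :
    Subsingleton (M.V k) :=
  Module.finrank_zero_iff.mp h

theorem nontrivial_of_dim_ne_zero {M : ARep n} {k : Fin (n + 1)} (h : M.dimVec k ≠ 0) :
    Nontrivial (M.V k) := by
  by_contra hc
  rw [not_nontrivial_iff_subsingleton] at hc
  exact h (Module.finrank_zero_iff.mpr hc)

def dropZero {A B : Type} [AddCommGroup A] [Module ℂ A] [AddCommGroup B] [Module ℂ B]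
    (hB : Subsingleton B) : (A × B) ≃ₗ[ℂ] A where
  toFun := Prod.fst
  map_add' := fun _ _ => rfl
  map_smul' := fun _ _ => rfl
  invFun := fun m => (m, 0)
  left_inv := fun p => Prod.ext rfl (hB.elim _ _)
  right_inv := fun _ => rfl

theorem iso_dsum_zero {M Z : ARep n} (hZ : ∀ k, Z.dimVec k = 0) : ARepIso (M.dsum Z) M := by
  have hs : ∀ k, Subsingleton (Z.V k) := fun k => subsingleton_of_dim_zero (hZ k)
  exact ⟨fun k => dropZero (hs k), fun k x => rfl⟩

theorem dsum_comm (P Q : ARep n) : ARepIso (P.dsum Q) (Q.dsum P) :=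
  ⟨fun k => LinearEquiv.prodComm ℂ _ _, fun k x => rfl⟩

noncomputable def intervalRep (n : ℕ) (i j : Fin (n + 1)) : ARep n where
  V k := Fin (intervalRoot n i j k) → ℂ
  f k := { toFun := fun g _ => ∑ t, g t
           map_add' := fun g h => by
             funext s; simp [Finset.sum_add_distrib]
           map_smul' := fun c g => by
             funext s; simp [Finset.mul_sum] }

theorem dimVec_intervalRep (i j : Fin (n + 1)) :
    (intervalRep n i j).dimVec = intervalRoot n i j := by
  funext k
  simp [ARep.dimVec, intervalRep, Module.finrank_fin_fun]
  exact Module.finrank_fin_fun ℂ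

theorem intervalRoot_le_one (i j k : Fin (n + 1)) : intervalRoot n i j k ≤ 1 := by
  unfold intervalRoot; split <;> simp

theorem mem_of_root_ne_zero {i j k : Fin (n + 1)} (h : intervalRoot n i j k ≠ 0) :
    i ≤ k ∧ k ≤ j := by
  by_contra hc
  simp [intervalRoot, hc] at h

theorem root_eq_one_of_mem {i j k : Fin (n + 1)} (h : i ≤ k ∧ k ≤ j) :
    intervalRoot n i j k = 1 := by
  simp [intervalRoot, h]

theorem root_inj {i j i' j' : Fin (n + 1)} (h : intervalRoot n i j = intervalRoot n i' j')
    (hij : i ≤ j) (hij' : i' ≤ j') : i = i' ∧ j = j' := by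
  have h1 : i' ≤ i ∧ i ≤ j' := by
    apply mem_of_root_ne_zero (i := i') (j := j')
    rw [← h, root_eq_one_of_mem ⟨le_refl i, hij⟩]; exact one_ne_zero
  have h2 : i ≤ i' ∧ i' ≤ j := by
    apply mem_of_root_ne_zero (i := i) (j := j)
    rw [h, root_eq_one_of_mem ⟨le_refl i', hij'⟩]; exact one_ne_zero
  have h3 : i' ≤ j ∧ j ≤ j' := by
    apply mem_of_root_ne_zero (i := i') (j := j')
    rw [← h, root_eq_one_of_mem ⟨hij, le_refl j⟩]; exact one_ne_zero
  have h4 : i ≤ j' ∧ j' ≤ j := by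
    apply mem_of_root_ne_zero (i := i) (j := j)
    rw [h, root_eq_one_of_mem ⟨hij', le_refl j'⟩]; exact one_ne_zero
  exact ⟨le_antisymm h2.1 h1.1, le_antisymm h3.2 h4.2⟩

theorem sum_fin_le_one {m : ℕ} (hm : m ≤ 1) (g : Fin m → ℂ) (t : Fin m) :
    ∑ u, g u = g t := by
  apply Finset.sum_eq_single_of_mem t (Finset.mem_univ t)
  intro b _ hb
  exact absurd (Fin.ext (by omega)) hb

theorem sum_fin_zero {m : ℕ} (hm : m = 0) (g : Fin m → ℂ) : ∑ u, g u = 0 := by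
  subst hm; simp

end GabrielAux

namespace GabrielAux

variable {n : ℕ}

theorem indec_core {i j : Fin (n + 1)} (hij : i ≤ j) {P Q : ARep n}
    (hd : ∀ k, P.dimVec k + Q.dimVec k = intervalRoot n i j k)
    (h : ARepIso (intervalRep n i j) (P.dsum Q))
    {s t : Fin (n + 1)} (hs : P.dimVec s ≠ 0) (ht : Q.dimVec t ≠ 0) (hst : s < t) : False := by
  classical
  obtain ⟨e, he⟩ := h
  have hs' : i ≤ s ∧ s ≤ j := by
    apply mem_of_root_ne_zero (i := i) (j := j)
    intro h0; rw [← hd s] at h0; omega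
  have ht' : i ≤ t ∧ t ≤ j := by
    apply mem_of_root_ne_zero (i := i) (j := j)
    intro h0; rw [← hd t] at h0; omega
  have hPt : P.dimVec t = 0 := by
    have h1 := hd t; rw [root_eq_one_of_mem ht'] at h1; omega
  set U : Finset (Fin (n + 1)) :=
    Finset.univ.filter (fun k => s ≤ k ∧ k ≤ t ∧ P.dimVec k = 0) with hU
  have htU : t ∈ U := by simp [hU, le_of_lt hst, hPt]
  have hUne : U.Nonempty := ⟨t, htU⟩
  set u := U.min' hUne with hu
  have huU : u ∈ U := U.min'_mem hUne
  have huU' : s ≤ u ∧ u ≤ t ∧ P.dimVec u = 0 := by simpa [hU] using huU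
  have hsu : s < u := by
    rcases lt_or_eq_of_le huU'.1 with h1 | h1
    · exact h1
    · exact absurd (h1 ▸ huU'.2.2) hs
  have hu0 : 0 < u.val := lt_of_le_of_lt (Nat.zero_le _) hsu
  have hun : u.val - 1 < n := by
    have h1 : u.val ≤ t.val := huU'.2.1
    have h2 : t.val < n + 1 := t.isLt
    omega
  set a : Fin n := ⟨u.val - 1, hun⟩ with ha
  have hss : a.succ = u := by
    apply Fin.ext
    simp [ha, Fin.val_succ]
    omega
  have hkc1 : s ≤ a.castSucc := by
    rw [Fin.le_def]; simp [ha]; omega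
  have hkc2 : a.castSucc ≤ t := by
    rw [Fin.le_def]; simp [ha]
    have := huU'.2.1
    rw [Fin.le_def] at this
    omega
  have hkclt : a.castSucc < u := by
    rw [← hss]; exact Fin.castSucc_lt_succ
  have hPkc : P.dimVec a.castSucc ≠ 0 := by
    intro h0
    have : a.castSucc ∈ U := by simp [hU, hkc1, hkc2, h0]
    exact absurd (U.min'_le _ this) (not_le.mpr hkclt)
  have hkc_int : i ≤ a.castSucc ∧ a.castSucc ≤ j := ⟨le_trans hs'.1 hkc1, le_trans hkc2 ht'.2⟩
  have hroot_kc : intervalRoot n i j a.castSucc = 1 := root_eq_one_of_mem hkc_int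
  have hQkc : Q.dimVec a.castSucc = 0 := by
    have h1 := hd a.castSucc; rw [hroot_kc] at h1; omega
  have hu_int : i ≤ u ∧ u ≤ j := ⟨le_trans hs'.1 huU'.1, le_trans huU'.2.1 ht'.2⟩
  have hroot_u : intervalRoot n i j u = 1 := root_eq_one_of_mem hu_int
  have hPsucc : P.dimVec a.succ = 0 := by rw [hss]; exact huU'.2.2
  have sQ : Subsingleton (Q.V a.castSucc) := subsingleton_of_dim_zero hQkc
  have sP : Subsingleton (P.V a.succ) := subsingleton_of_dim_zero hPsucc
  -- the nonzero vector
  set x0 : (intervalRep n i j).V a.castSucc := fun _ => 1 with hx0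
  have key := he a x0
  have hR : (P.dsum Q).f a (e a.castSucc x0) = 0 := by
    have h1 : (P.f a) (e a.castSucc x0).1 = 0 := sP.elim _ _
    have h2 : (Q.f a) (e a.castSucc x0).2 = 0 := by
      rw [sQ.elim (e a.castSucc x0).2 0, map_zero]
    show ((P.f a) (e a.castSucc x0).1, (Q.f a) (e a.castSucc x0).2) = 0
    rw [h1, h2]; rfl
  have hz : (intervalRep n i j).f a x0 = 0 :=
    (LinearEquiv.map_eq_zero_iff _).mp (key.trans hR)
  have hidx : (0 : ℕ) < intervalRoot n i j a.succ := by rw [hss, hroot_u]; omega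
  have hcontr := congrFun hz ⟨0, hidx⟩
  have hsum : ((intervalRep n i j).f a x0) ⟨0, hidx⟩ =
      ∑ u : Fin (intervalRoot n i j a.castSucc), (1 : ℂ) := rfl
  rw [hsum] at hcontr
  rw [Finset.sum_const, Finset.card_univ, Fintype.card_fin, hroot_kc, one_smul] at hcontr
  exact one_ne_zero (hcontr.trans rfl)

theorem intervalRep_indec {i j : Fin (n + 1)} (hij : i ≤ j) : (intervalRep n i j).Indec := by
  constructor
  · refine ⟨i, ?_⟩
    rw [dimVec_intervalRep, root_eq_one_of_mem ⟨le_refl i, hij⟩]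
    exact one_ne_zero
  · intro P Q h
    by_contra hc
    push_neg at hc
    obtain ⟨⟨s, hs⟩, ⟨t, ht⟩⟩ := hc
    have hd : ∀ k, P.dimVec k + Q.dimVec k = intervalRoot n i j k := by
      intro k
      have h1 := congrFun (dimVec_eq_of_iso h) k
      rw [dimVec_dsum] at h1
      rw [← h1, congrFun (dimVec_intervalRep i j) k]
    rcases lt_trichotomy s t with h1 | h1 | h1
    · exact indec_core hij hd h hs ht h1
    · subst h1
      have h2 := hd s
      have h3 := intervalRoot_le_one i j s
      omega
    · have hswap : ARepIso (intervalRep n i j) (Q.dsum P) := iso_trans h (dsum_comm P Q)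
      have hd' : ∀ k, Q.dimVec k + P.dimVec k = intervalRoot n i j k := fun k => by
        rw [add_comm]; exact hd k
      exact indec_core hij hd' hswap ht hs h1

end GabrielAux

namespace GabrielAux

variable {n : ℕ}

theorem exists_dual {W : Type} [AddCommGroup W] [Module ℂ W] {z : W} (hz : z ≠ 0) :
    ∃ μ : W →ₗ[ℂ] ℂ, μ z = 1 := by
  obtain ⟨q, hq⟩ := Submodule.exists_isCompl (ℂ ∙ z)
  refine ⟨(LinearEquiv.toSpanNonzeroSingleton ℂ W z hz).symm.toLinearMap ∘ₗ
      Submodule.linearProjOfIsCompl _ q hq, ?_⟩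
  have h1 : Submodule.linearProjOfIsCompl _ q hq z =
      ⟨z, Submodule.mem_span_singleton_self z⟩ := by
    exact Submodule.linearProjOfIsCompl_apply_left hq ⟨z, Submodule.mem_span_singleton_self z⟩
  rw [LinearMap.comp_apply, h1]
  rw [LinearEquiv.coe_coe, LinearEquiv.symm_apply_eq]
  exact (LinearEquiv.toSpanNonzeroSingleton_one ℂ W z hz).symm

/-- The splitting construction: given the data of functionals `π` and a "thread" `x`,
build a direct sum decomposition of `M` with interval summand. -/
theorem split_of_data (M : ARep n) (i j : Fin (n + 1))
    (π : ∀ k, M.V k →ₗ[ℂ] ℂ) (x : ∀ k, M.V k)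
    (hπx : ∀ k, i ≤ k ∧ k ≤ j → π k (x k) = 1)
    (hπ0 : ∀ k, ¬(i ≤ k ∧ k ≤ j) → π k = 0)
    (hC1 : ∀ (k : Fin n) (v : M.V k.castSucc),
      π k.succ (M.f k v) = if i ≤ k.castSucc ∧ k.succ ≤ j then π k.castSucc v else 0)
    (hCOM2 : ∀ (k : Fin n) (v : M.V k.castSucc),
      π k.succ (M.f k v) • x k.succ = π k.castSucc v • M.f k (x k.castSucc)) :
    ∃ M' : ARep n, ARepIso M ((intervalRep n i j).dsum M') := by
  classical
  have PXor : ∀ k, π k (x k) = 1 ∨ π k = 0 := by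
    intro k
    by_cases h : i ≤ k ∧ k ≤ j
    · exact Or.inl (hπx k h)
    · exact Or.inr (hπ0 k h)
  have hker : ∀ (k : Fin n) (v : M.V k.castSucc), v ∈ LinearMap.ker (π k.castSucc) →
      M.f k v ∈ LinearMap.ker (π k.succ) := by
    intro k v hv
    rw [LinearMap.mem_ker] at hv ⊢
    rw [hC1 k v]
    split
    · exact hv
    · rfl
  refine ⟨{ V := fun k => LinearMap.ker (π k)
            f := fun k => (M.f k).restrict (fun v hv => hker k v hv) }, ?_⟩
  have mem_e : ∀ k (v : M.V k), v - π k v • x k ∈ LinearMap.ker (π k) := by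
    intro k v
    rw [LinearMap.mem_ker, map_sub, map_smul, smul_eq_mul]
    rcases PXor k with h | h
    · rw [h, mul_one, sub_self]
    · simp [h]
  refine ⟨fun k =>
    { toFun := fun v => (fun _ => π k v, ⟨v - π k v • x k, mem_e k v⟩)
      map_add' := ?_
      map_smul' := ?_
      invFun := fun p => (∑ t, p.1 t) • x k + (p.2 : M.V k)
      left_inv := ?_
      right_inv := ?_ }, ?_⟩
  · intro v v'
    refine Prod.ext (funext fun t => ?_) (Subtype.ext ?_)
    · show π k (v + v') = π k v + π k v'
      rw [map_add]
    · show (v + v') - (π k (v + v')) • x k = (v - π k v • x k) + (v' - π k v' • x k)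
      rw [map_add, add_smul]; abel
  · intro c v
    refine Prod.ext (funext fun t => ?_) (Subtype.ext ?_)
    · show π k (c • v) = c * π k v
      rw [map_smul, smul_eq_mul]
    · show c • v - π k (c • v) • x k = c • (v - π k v • x k)
      rw [map_smul, smul_eq_mul, smul_sub, smul_smul]
  · intro v
    show (∑ _t : Fin (intervalRoot n i j k), π k v) • x k + (v - π k v • x k) = v
    by_cases hk : i ≤ k ∧ k ≤ j
    · rw [Finset.sum_const, Finset.card_univ, Fintype.card_fin, root_eq_one_of_mem hk,
        one_smul]
      abel
    · have hπk : π k = 0 := hπ0 k hk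
      simp [hπk]
  · rintro ⟨g, c⟩
    have hc := c.2
    rw [LinearMap.mem_ker] at hc
    refine Prod.ext (funext fun t => ?_) (Subtype.ext ?_)
    · show π k ((∑ t, g t) • x k + (c : M.V k)) = g t
      rw [map_add, map_smul, hc, smul_eq_mul, add_zero]
      rcases PXor k with h | h
      · rw [h, mul_one]
        exact sum_fin_le_one (intervalRoot_le_one i j k) g t
      · exfalso
        have hk : ¬(i ≤ k ∧ k ≤ j) := by
          intro hk
          have := hπx k hk
          rw [h] at this
          simpa using this
        have h0 : intervalRoot n i j k = 0 := by simp [intervalRoot, hk]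
        exact absurd t.isLt (by omega)
    · show ((∑ t, g t) • x k + (c : M.V k)) - π k ((∑ t, g t) • x k + (c : M.V k)) • x k
        = (c : M.V k)
      rw [map_add, map_smul, hc, smul_eq_mul, add_zero]
      rcases PXor k with h | h
      · rw [h, mul_one]; abel
      · have hk : ¬(i ≤ k ∧ k ≤ j) := by
          intro hk
          have := hπx k hk
          rw [h] at this
          simpa using this
        have hg : (∑ t, g t) = 0 :=
          sum_fin_zero (by simp [intervalRoot, hk]) g
        simp [h, hg]
  · -- commutation
    intro k v
    refine Prod.ext (funext fun t => ?_) (Subtype.ext ?_)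
    · show π k.succ (M.f k v) = ∑ _u : Fin (intervalRoot n i j k.castSucc), π k.castSucc v
      by_cases hc : i ≤ k.castSucc ∧ k.succ ≤ j
      · rw [hC1 k v, if_pos hc]
        have hkc : i ≤ k.castSucc ∧ k.castSucc ≤ j :=
          ⟨hc.1, le_trans (le_of_lt (Fin.castSucc_lt_succ (i := k))) hc.2⟩
        rw [Finset.sum_const, Finset.card_univ, Fintype.card_fin, root_eq_one_of_mem hkc,
          one_smul]
      · rw [hC1 k v, if_neg hc]
        by_cases hkc : i ≤ k.castSucc ∧ k.castSucc ≤ j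
        · -- then k.succ > j, so the index type Fin (root k.succ) is empty
          exfalso
          have hks : ¬(i ≤ k.succ ∧ k.succ ≤ j) := by
            intro hks
            exact hc ⟨hkc.1, hks.2⟩
          have h0 : intervalRoot n i j k.succ = 0 := by simp [intervalRoot, hks]
          exact absurd t.isLt (by omega)
        · rw [sum_fin_zero (by simp [intervalRoot, hkc]) _]
    · show M.f k v - π k.succ (M.f k v) • x k.succ
        = M.f k (v - π k.castSucc v • x k.castSucc)
      rw [map_sub, map_smul, hCOM2 k v]
  done

end GabrielAux

namespace GabrielAux

variable {n : ℕ}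

def eqMap (M : ARep n) {a b : Fin (n + 1)} (h : a = b) : M.V a →ₗ[ℂ] M.V b :=
  h ▸ (LinearMap.id : M.V a →ₗ[ℂ] M.V a)

def eqEl (M : ARep n) {a b : Fin (n + 1)} (h : a = b) (v : M.V a) : M.V b :=
  h ▸ v

theorem eqMap_ne_zero (M : ARep n) {a b : Fin (n + 1)} (h : a = b)
    (hb : Nontrivial (M.V b)) : eqMap M h ≠ 0 := by
  subst h
  intro h0
  obtain ⟨v, hv⟩ := exists_ne (0 : M.V a)
  exact hv (DFunLike.congr_fun h0 v)

theorem eqEl_app (M : ARep n) (g : ∀ k, M.V k →ₗ[ℂ] ℂ) {a b : Fin (n + 1)} (h : a = b)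
    (v : M.V a) : g b (eqEl M h v) = g a v := by subst h; rfl

theorem split (M : ARep n) (hM : ∃ k, M.dimVec k ≠ 0) :
    ∃ (i j : Fin (n + 1)) (_ : i ≤ j) (M' : ARep n),
      ARepIso M ((intervalRep n i j).dsum M') := by
  classical
  obtain ⟨k0, hk0⟩ := hM
  -- maximal support vertex j
  set S : Finset (Fin (n + 1)) := Finset.univ.filter (fun k => M.dimVec k ≠ 0) with hS
  have hSne : S.Nonempty := ⟨k0, by simp [hS, hk0]⟩
  set j := S.max' hSne with hj
  have hjS : M.dimVec j ≠ 0 := by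
    have := S.max'_mem hSne
    simpa [hS] using this
  have hjmax : ∀ k, j < k → M.dimVec k = 0 := by
    intro k hk
    by_contra hc
    exact absurd (S.le_max' k (by simp [hS, hc])) (not_le.mpr hk)
  have hnt : Nontrivial (M.V j) := nontrivial_of_dim_ne_zero hjS
  have hsub : ∀ k, j < k → Subsingleton (M.V k) := fun k hk =>
    subsingleton_of_dim_zero (hjmax k hk)
  -- the maps G k : V k → V j
  set G : ∀ k, M.V k →ₗ[ℂ] M.V j :=
    Fin.reverseInduction (if h : Fin.last n = j then eqMap M h else 0)
      (fun k next => if h : k.castSucc = j then eqMap M h else next ∘ₗ M.f k) with hG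
  have G_rec : ∀ k : Fin n, k.castSucc ≠ j → G k.castSucc = G k.succ ∘ₗ M.f k := by
    intro k hk
    simp only [hG]
    rw [Fin.reverseInduction_castSucc, dif_neg hk]
  have G_diag : ∀ k (h : k = j), G k = eqMap M h := by
    intro k
    induction k using Fin.lastCases with
    | last =>
      intro h
      simp only [hG]
      rw [Fin.reverseInduction_last, dif_pos h]
    | cast a =>
      intro h
      simp only [hG]
      rw [Fin.reverseInduction_castSucc, dif_pos h]
  have G_j : G j ≠ 0 := by
    rw [G_diag j rfl]
    exact eqMap_ne_zero M rfl hnt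
  -- minimal vertex i from which V j is reached
  set T : Finset (Fin (n + 1)) := Finset.univ.filter (fun k => G k ≠ 0) with hT
  have hjT : j ∈ T := by simp [hT, G_j]
  have hTne : T.Nonempty := ⟨j, hjT⟩
  set i := T.min' hTne with hi
  have hGi : G i ≠ 0 := by
    have := T.min'_mem hTne
    simpa [hT] using this
  have hij : i ≤ j := T.min'_le j hjT
  have hmin : ∀ k, k < i → G k = 0 := by
    intro k hk
    by_contra hc
    exact absurd (T.min'_le k (by simp [hT, hc])) (not_le.mpr hk)
  -- the thread start w and dual functional μ
  have hex : ∃ w, G i w ≠ 0 := by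
    by_contra hc
    push_neg at hc
    exact hGi (LinearMap.ext fun w => hc w)
  obtain ⟨w, hw⟩ := hex
  obtain ⟨μ, hμ⟩ := exists_dual hw
  set π : ∀ k, M.V k →ₗ[ℂ] ℂ := fun k => μ ∘ₗ G k with hπ
  have π_rec : ∀ k : Fin n, k.castSucc ≠ j → π k.castSucc = π k.succ ∘ₗ M.f k := by
    intro k hk
    rw [hπ]
    show μ ∘ₗ G k.castSucc = (μ ∘ₗ G k.succ) ∘ₗ M.f k
    rw [G_rec k hk, LinearMap.comp_assoc]
  have π_low : ∀ k, k < i → π k = 0 := by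
    intro k hk
    rw [hπ]
    show μ ∘ₗ G k = 0
    rw [hmin k hk, LinearMap.comp_zero]
  have π_high : ∀ k, j < k → π k = 0 := by
    intro k hk
    have := hsub k hk
    exact LinearMap.ext fun v => by rw [(this).elim v 0, map_zero, LinearMap.zero_apply]
  have π_iw : π i w = 1 := by
    rw [hπ]; exact hμ
  have C1 : ∀ (k : Fin n) (v : M.V k.castSucc),
      π k.succ (M.f k v) = if i ≤ k.castSucc ∧ k.succ ≤ j then π k.castSucc v else 0 := by
    intro k v
    by_cases hc : i ≤ k.castSucc ∧ k.succ ≤ j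
    · rw [if_pos hc]
      have hne : k.castSucc ≠ j := ne_of_lt (lt_of_lt_of_le (Fin.castSucc_lt_succ (i := k)) hc.2)
      rw [π_rec k hne]; rfl
    · rw [if_neg hc]
      by_cases h2 : k.succ ≤ j
      · have h3 : k.castSucc < i := by
          rcases not_and_or.mp hc with h4 | h4
          · exact not_le.mp h4
          · exact absurd h2 h4
        have hne : k.castSucc ≠ j := ne_of_lt (lt_of_lt_of_le h3 hij)
        have := π_rec k hne
        rw [π_low _ h3] at this
        exact (DFunLike.congr_fun this.symm v : _)
      · rw [π_high k.succ (not_le.mp h2)]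
        rfl
  -- the thread x
  set x : ∀ k, M.V k := Fin.induction (if h : i = 0 then eqEl M h w else 0)
    (fun k prev => if h : i = k.succ then eqEl M h w else M.f k prev) with hx
  have x_succ : ∀ k : Fin n, i ≠ k.succ → x k.succ = M.f k (x k.castSucc) := by
    intro k hk
    have h1 : x k.succ = if h : i = k.succ then eqEl M h w else M.f k (x k.castSucc) := rfl
    rw [h1, dif_neg hk]
  have PX1 : ∀ k, i ≤ k → k ≤ j → π k (x k) = 1 := by
    intro k
    induction k using Fin.induction with
    | zero =>
      intro h0 _
      have hi0 : i = 0 := Fin.le_zero_iff.mp h0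
      have hx0 : x 0 = eqEl M hi0 w := by
        have h1 : x 0 = if h : i = 0 then eqEl M h w else 0 := rfl
        rw [h1, dif_pos hi0]
      rw [hx0, eqEl_app M π hi0 w, π_iw]
    | succ k IH =>
      intro hik hkj
      by_cases hik' : i = k.succ
      · have hxs : x k.succ = eqEl M hik' w := by
          have h1 : x k.succ = if h : i = k.succ then eqEl M h w else M.f k (x k.castSucc) := rfl
          rw [h1, dif_pos hik']
        rw [hxs, eqEl_app M π hik' w, π_iw]
      · have hikc : i ≤ k.castSucc := by
          rw [Fin.le_def] at hik ⊢
          rw [Fin.val_succ] at hik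
          rw [Fin.coe_castSucc]
          have : i.val ≠ k.val + 1 := fun hh => hik' (Fin.ext (by rw [Fin.val_succ]; exact hh))
          omega
        have hkcj : k.castSucc ≤ j := le_trans (le_of_lt (Fin.castSucc_lt_succ (i := k))) hkj
        rw [x_succ k hik', C1 k _, if_pos ⟨hikc, hkj⟩]
        exact IH hikc hkcj
  have hπx : ∀ k, i ≤ k ∧ k ≤ j → π k (x k) = 1 := fun k hk => PX1 k hk.1 hk.2
  have hπ0 : ∀ k, ¬(i ≤ k ∧ k ≤ j) → π k = 0 := by
    intro k hk
    rcases not_and_or.mp hk with h | h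
    · exact π_low k (not_le.mp h)
    · exact π_high k (not_le.mp h)
  have x_fwd : ∀ k : Fin n, i ≤ k.castSucc → M.f k (x k.castSucc) = x k.succ := by
    intro k hk
    refine (x_succ k ?_).symm
    intro hh
    rw [hh] at hk
    exact absurd hk (not_le.mpr (Fin.castSucc_lt_succ (i := k)))
  have hCOM2 : ∀ (k : Fin n) (v : M.V k.castSucc),
      π k.succ (M.f k v) • x k.succ = π k.castSucc v • M.f k (x k.castSucc) := by
    intro k v
    by_cases hc : i ≤ k.castSucc ∧ k.succ ≤ j
    · rw [C1 k v, if_pos hc, x_fwd k hc.1]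
    · rw [C1 k v, if_neg hc, zero_smul]
      rcases not_and_or.mp hc with h1 | h1
      · rw [π_low _ (not_le.mp h1), LinearMap.zero_apply, zero_smul]
      · by_cases h2 : j < k.castSucc
        · rw [π_high _ h2, LinearMap.zero_apply, zero_smul]
        · have := hsub k.succ (not_le.mp h1)
          rw [(this).elim (M.f k (x k.castSucc)) 0, smul_zero]
  obtain ⟨M', hM'⟩ := split_of_data M i j π x hπx hπ0 C1 hCOM2
  exact ⟨i, j, hij, M', hM'⟩

end GabrielAux

namespace GabrielAux

variable {n : ℕ}

theorem interval_dim_ne_zero (i j : Fin (n + 1)) (hij : i ≤ j) :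
    (intervalRep n i j).dimVec i ≠ 0 := by
  rw [dimVec_intervalRep, root_eq_one_of_mem ⟨le_refl i, hij⟩]
  exact one_ne_zero

theorem indec_split {M : ARep n} (hM : M.Indec) :
    ∃ (i j : Fin (n + 1)) (_ : i ≤ j), M.dimVec = intervalRoot n i j ∧
      ARepIso M (intervalRep n i j) := by
  obtain ⟨i, j, hij, M', hiso⟩ := split M hM.1
  refine ⟨i, j, hij, ?_⟩
  rcases hM.2 _ _ hiso with h | h
  · exact absurd (h i) (interval_dim_ne_zero i j hij)
  · constructor
    · funext k
      rw [congrFun (dimVec_eq_of_iso hiso) k, dimVec_dsum,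
        congrFun (dimVec_intervalRep i j) k, h k, add_zero]
    · exact iso_trans hiso (iso_dsum_zero h)

theorem iso_interval_of_indec {M : ARep n} (hM : M.Indec) {i j : Fin (n + 1)} (hij : i ≤ j)
    (hd : M.dimVec = intervalRoot n i j) : ARepIso M (intervalRep n i j) := by
  obtain ⟨i', j', hij', hdim, hiso⟩ := indec_split hM
  have heq : intervalRoot n i j = intervalRoot n i' j' := hd.symm.trans hdim
  obtain ⟨hii, hjj⟩ := root_inj heq hij hij'
  rw [hii, hjj]
  exact hiso

end GabrielAux

open GabrielAux in
/-- Gabriel's theorem in type A: for the linearly oriented quiver of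
type `A_{n+1}`, for each pair `i ≤ j` there is a unique (up to isomorphism)
indecomposable representation of dimension vector `α_i + ⋯ + α_j`, and every
indecomposable representation is of this form; hence indecomposables are in
bijection with the positive roots of `sl_{n+2}`. -/
theorem gabriel_type_A (n : ℕ) :
    (∀ i j : Fin (n + 1), i ≤ j →
      (∃ M : ARep n, M.Indec ∧ M.dimVec = intervalRoot n i j) ∧
      (∀ M N : ARep n, M.Indec → N.Indec → M.dimVec = intervalRoot n i j →
        N.dimVec = intervalRoot n i j → ARepIso M N)) ∧
    (∀ M : ARep n, M.Indec → ∃ i j : Fin (n + 1), i ≤ j ∧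
      M.dimVec = intervalRoot n i j) := by
  constructor
  · intro i j hij
    constructor
    · exact ⟨intervalRep n i j, intervalRep_indec hij, dimVec_intervalRep i j⟩
    · intro M N hM hN hMd hNd
      exact iso_trans (iso_interval_of_indec hM hij hMd)
        (iso_symm (iso_interval_of_indec hN hij hNd))
  · intro M hM
    obtain ⟨i, j, hij, hd, -⟩ := indec_split hM
    exact ⟨i, j, hij, hd⟩
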